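/- Fin^{n+1} embeds isomorphically into Fin_ω for every n ∈ ω: there is a bijection f : ∑_{i>0} ω^i → ω^{n+1} such that f⁻¹[A] ∈ Fin_ω for all A ∈ Fin^{n+1}. -/

import Mathlib

/-- `FinPow n` is the Fubini power `Fin^{n+1}` of the ideal of finite sets, an
ideal on `ω^{n+1}` (represented as `Fin (n+1) → ℕ`). -/
def FinPow : (n : ℕ) → Set (Set (Fin (n + 1) → ℕ))
  | 0 => {A | A.Finite}
  | n + 1 => {A | {k : ℕ | {y : Fin (n + 1) → ℕ | Fin.cons k y ∈ A} ∉ FinPow n}.Finite}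

/-- Projection of `ω^n` onto the last `m` coordinates. -/
def lastProj {m n : ℕ} (h : m ≤ n) (x : Fin n → ℕ) : Fin m → ℕ :=
  fun k => x ⟨n - m + k.val, by have := k.isLt; omega⟩

/-- The inductive limit `Fin_ω` of the Fubini powers `(Fin^n)_{n>0}` along the
projections onto the last coordinates. -/
def FinOmega : Set (Set (Σ n : ℕ, Fin (n + 1) → ℕ)) :=
  {M | ∃ m : ℕ, ∃ P : Set (Fin (m + 1) → ℕ), Pᶜ ∈ FinPow m ∧
    ∀ (n : ℕ) (h : m ≤ n), ∀ x : Fin (n + 1) → ℕ,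
      lastProj (Nat.succ_le_succ h) x ∈ P → (⟨n, x⟩ : Σ n : ℕ, Fin (n + 1) → ℕ) ∉ M}

/- ### Auxiliary material -/

abbrev SigSpace := Σ m : ℕ, Fin (m + 1) → ℕ

/-- last coordinate of a point of the sum space -/
def lastc (p : SigSpace) : ℕ := p.2 ⟨p.1, Nat.lt_succ_self _⟩

/-- The key "small projection" set associated to an injective coding `F` and a set `D`. -/
def hatS (F : SigSpace → ℕ) (d : ℕ) (D : Set (Fin (d + 1) → ℕ)) : Set (Fin (d + 1) → ℕ) :=
  {y | ∃ p : SigSpace, Function.update y (Fin.last d) (F p) ∈ D ∧ lastc p = y (Fin.last d)}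

lemma finPow_zero_iff {A : Set (Fin 1 → ℕ)} : A ∈ FinPow 0 ↔ A.Finite := Iff.rfl

lemma finPow_succ_iff {d : ℕ} {A : Set (Fin (d + 2) → ℕ)} :
    A ∈ FinPow (d + 1) ↔ {k : ℕ | {y : Fin (d + 1) → ℕ | Fin.cons k y ∈ A} ∉ FinPow d}.Finite :=
  Iff.rfl

lemma fin1_update (y : Fin 1 → ℕ) (t : ℕ) :
    Function.update y (Fin.last 0) t = fun _ => t := by
  funext i
  rw [Subsingleton.elim i (Fin.last 0), Function.update_self]

lemma cons_apply_last (d c : ℕ) (y : Fin (d + 1) → ℕ) :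
    (Fin.cons c y : Fin (d + 2) → ℕ) (Fin.last (d + 1)) = y (Fin.last d) := by
  rw [← Fin.succ_last, Fin.cons_succ]

lemma update_cons_last (d c t : ℕ) (y : Fin (d + 1) → ℕ) :
    Function.update (Fin.cons c y : Fin (d + 2) → ℕ) (Fin.last (d + 1)) t
      = Fin.cons c (Function.update y (Fin.last d) t) := by
  have hls : Fin.last (d + 1) = (Fin.last d).succ := Fin.ext (by simp)
  funext i
  rw [hls]
  refine Fin.cases ?_ (fun i' => ?_) i
  · rw [Function.update_of_ne (Fin.succ_ne_zero _).symm, Fin.cons_zero, Fin.cons_zero]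
  · by_cases h : i' = Fin.last d
    · subst h
      rw [Function.update_self, Fin.cons_succ, Function.update_self]
    · rw [Function.update_of_ne (fun hE => h (Fin.succ_injective _ hE)), Fin.cons_succ,
        Fin.cons_succ, Function.update_of_ne h]

lemma hatS_cons (F : SigSpace → ℕ) (d c : ℕ) (D : Set (Fin (d + 2) → ℕ)) :
    {y : Fin (d + 1) → ℕ | Fin.cons c y ∈ hatS F (d + 1) D}
      = hatS F d {z | Fin.cons c z ∈ D} := by
  ext y
  simp only [hatS, Set.mem_setOf_eq, update_cons_last, cons_apply_last]

lemma hatS_small (F : SigSpace → ℕ) (hF : Function.Injective F) :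
    ∀ (d : ℕ) (D : Set (Fin (d + 1) → ℕ)), D ∈ FinPow d → hatS F d D ∈ FinPow d := by
  intro d
  induction d with
  | zero =>
    intro D hD
    have hD' : D.Finite := hD
    rw [finPow_zero_iff]
    have hsub : hatS F 0 D ⊆
        (fun p : SigSpace => fun _ : Fin 1 => lastc p) ''
          ((fun p : SigSpace => fun _ : Fin 1 => F p) ⁻¹' D) := by
      rintro y ⟨p, hp1, hp2⟩
      rw [fin1_update] at hp1
      exact ⟨p, hp1, by funext i; rw [Subsingleton.elim i (Fin.last 0)]; exact hp2⟩
    refine Set.Finite.subset (Set.Finite.image _ (Set.Finite.preimage ?_ hD')) hsub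
    intro a _ b _ hab
    exact hF (congrFun hab ⟨0, Nat.one_pos⟩)
  | succ d ih =>
    intro D hD
    rw [finPow_succ_iff] at hD ⊢
    refine Set.Finite.subset hD ?_
    intro c hc
    simp only [Set.mem_setOf_eq] at hc ⊢
    intro hDc
    apply hc
    rw [hatS_cons]
    exact ih _ hDc

lemma sigma_inj {a b : ℕ} {x : Fin (a + 1) → ℕ} {y : Fin (b + 1) → ℕ}
    (h : (⟨a, x⟩ : SigSpace) = ⟨b, y⟩) : a = b ∧ HEq x y :=
  ⟨congrArg Sigma.fst h, by cases h; rfl⟩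

lemma sigma_ext' {k k' : ℕ} (h : k = k') (x : Fin (k + 1) → ℕ) (x' : Fin (k' + 1) → ℕ)
    (hx : ∀ (i : ℕ) (hi : i < k + 1), x ⟨i, hi⟩ = x' ⟨i, by omega⟩) :
    (⟨k, x⟩ : SigSpace) = ⟨k', x'⟩ := by
  subst h
  exact congrArg (Sigma.mk k) (funext fun i => hx i.val i.isLt)

/-- assemble a point of level `N+1+j` from its code-part `w` and block `b` -/
def asm (N j : ℕ) (w : Fin (j + 1) → ℕ) (b : Fin (N + 1) → ℕ) : Fin (N + 1 + j + 1) → ℕ :=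
  fun i => if h : i.val < j then w ⟨i.val, by omega⟩
    else if h2 : i.val - j < N + 1 then b ⟨i.val - j, h2⟩ else w ⟨j, by omega⟩

/-- the code-part of a point `⟨k, x⟩` with `k ≥ N+1`. -/
def xhat (N k : ℕ) (x : Fin (k + 1) → ℕ) : Fin (k - (N + 1) + 1) → ℕ :=
  fun i => if h : i.val < k - (N + 1) then x ⟨i.val, by omega⟩ else x ⟨k, by omega⟩

/-- the visible block of a point `⟨k, x⟩` with `k ≥ N+1`: coordinates `k-(N+1), …, k-1`. -/
def blk (N k : ℕ) (hk : N + 1 ≤ k) (x : Fin (k + 1) → ℕ) : Fin (N + 1) → ℕ :=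
  fun i => x ⟨k - (N + 1) + i.val, by have := i.isLt; omega⟩

/-- the inverse of the desired bijection, defined directly -/
def gmap (N : ℕ) (e : SigSpace ≃ ℕ)
    (β : (Σ i : Fin (N + 1), Fin (i.val + 1) → ℕ) ≃ (Fin (N + 1) → ℕ))
    (y : Fin (N + 2) → ℕ) : SigSpace :=
  if y (Fin.last (N + 1)) = 0 then
    ⟨((β.symm (Fin.init y)).1 : ℕ), (β.symm (Fin.init y)).2⟩
  else
    ⟨N + 1 + (e.symm (y (Fin.last (N + 1)) - 1)).1,
      asm N (e.symm (y (Fin.last (N + 1)) - 1)).1 (e.symm (y (Fin.last (N + 1)) - 1)).2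
        (Fin.init y)⟩

lemma gmap_high (N : ℕ) (e : SigSpace ≃ ℕ)
    (β : (Σ i : Fin (N + 1), Fin (i.val + 1) → ℕ) ≃ (Fin (N + 1) → ℕ))
    (k : ℕ) (hk : N + 1 ≤ k) (x : Fin (k + 1) → ℕ) :
    gmap N e β (Fin.snoc (blk N k hk x) (e ⟨k - (N + 1), xhat N k x⟩ + 1)) = ⟨k, x⟩ := by
  unfold gmap
  rw [if_neg (by simp)]
  have hcode : e.symm ((Fin.snoc (blk N k hk x) (e ⟨k - (N + 1), xhat N k x⟩ + 1) :
      Fin (N + 2) → ℕ) (Fin.last (N + 1)) - 1) = ⟨k - (N + 1), xhat N k x⟩ := by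
    simp only [Fin.snoc_last, Nat.add_sub_cancel, Equiv.symm_apply_apply]
  rw [hcode, Fin.init_snoc]
  apply sigma_ext' (show N + 1 + (k - (N + 1)) = k by omega)
  intro i hi
  show asm N (k - (N + 1)) (xhat N k x) (blk N k hk x) ⟨i, hi⟩ = x ⟨i, by omega⟩
  unfold asm
  by_cases h1 : i < k - (N + 1)
  · rw [dif_pos h1]
    unfold xhat
    rw [dif_pos h1]
  · rw [dif_neg h1]
    by_cases h2 : i - (k - (N + 1)) < N + 1
    · rw [dif_pos h2]
      show x ⟨k - (N + 1) + (i - (k - (N + 1))), _⟩ = _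
      congr 1
      simp only [Fin.mk.injEq]
      omega
    · rw [dif_neg h2]
      unfold xhat
      rw [dif_neg (lt_irrefl _)]
      congr 1
      simp only [Fin.mk.injEq]
      omega

lemma gmap_low (N : ℕ) (e : SigSpace ≃ ℕ)
    (β : (Σ i : Fin (N + 1), Fin (i.val + 1) → ℕ) ≃ (Fin (N + 1) → ℕ))
    (k : ℕ) (hk : k < N + 1) (x : Fin (k + 1) → ℕ) :
    gmap N e β (Fin.snoc (β ⟨⟨k, hk⟩, x⟩) 0) = ⟨k, x⟩ := by
  unfold gmap
  rw [if_pos (by simp)]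
  have hq : β.symm (Fin.init (Fin.snoc (β ⟨⟨k, hk⟩, x⟩) 0 : Fin (N + 2) → ℕ))
      = ⟨⟨k, hk⟩, x⟩ := by
    simp only [Fin.init_snoc, Equiv.symm_apply_apply]
  rw [hq]

lemma asm_inj (N : ℕ) {j1 j2 : ℕ} {w1 : Fin (j1 + 1) → ℕ} {w2 : Fin (j2 + 1) → ℕ}
    {b1 b2 : Fin (N + 1) → ℕ}
    (h : (⟨N + 1 + j1, asm N j1 w1 b1⟩ : SigSpace) = ⟨N + 1 + j2, asm N j2 w2 b2⟩) :
    (⟨j1, w1⟩ : SigSpace) = ⟨j2, w2⟩ ∧ b1 = b2 := by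
  have h1 : N + 1 + j1 = N + 1 + j2 := congrArg Sigma.fst h
  have hj : j1 = j2 := by omega
  subst hj
  have H : asm N j1 w1 b1 = asm N j1 w2 b2 := by simpa using h
  constructor
  · refine congrArg (Sigma.mk j1) (funext fun i => ?_)
    obtain ⟨iv, hlt⟩ := i
    by_cases hc : iv < j1
    · have := congrFun H ⟨iv, by omega⟩
      unfold asm at this
      rw [dif_pos hc, dif_pos hc] at this
      exact this
    · have hij : iv = j1 := by omega
      subst hij
      have := congrFun H ⟨iv + (N + 1), by omega⟩
      unfold asm at this
      rw [dif_neg (show ¬ iv + (N + 1) < iv by omega),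
        dif_neg (show ¬ iv + (N + 1) - iv < N + 1 by omega),
        dif_neg (show ¬ iv + (N + 1) < iv by omega),
        dif_neg (show ¬ iv + (N + 1) - iv < N + 1 by omega)] at this
      exact this
  · funext a
    obtain ⟨av, halt⟩ := a
    have := congrFun H ⟨j1 + av, by omega⟩
    unfold asm at this
    rw [dif_neg (show ¬ j1 + av < j1 by omega), dif_neg (show ¬ j1 + av < j1 by omega),
      dif_pos (show j1 + av - j1 < N + 1 by omega),
      dif_pos (show j1 + av - j1 < N + 1 by omega)] at this
    simp only [show j1 + av - j1 = av by omega] at this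
    exact this

lemma gmap_injective (N : ℕ) (e : SigSpace ≃ ℕ)
    (β : (Σ i : Fin (N + 1), Fin (i.val + 1) → ℕ) ≃ (Fin (N + 1) → ℕ)) :
    Function.Injective (gmap N e β) := by
  intro y y' h
  unfold gmap at h
  by_cases h0 : y (Fin.last (N + 1)) = 0 <;> by_cases h0' : y' (Fin.last (N + 1)) = 0
  · rw [if_pos h0, if_pos h0'] at h
    obtain ⟨h1, h2⟩ := sigma_inj h
    have hq : β.symm (Fin.init y) = β.symm (Fin.init y') :=
      Sigma.ext (Fin.ext h1) h2
    have hinit : Fin.init y = Fin.init y' := by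
      have := congrArg β hq
      simpa using this
    rw [← Fin.snoc_init_self y, ← Fin.snoc_init_self y', hinit, h0, h0']
  · rw [if_pos h0, if_neg h0'] at h
    have h1 := congrArg Sigma.fst h
    have := (β.symm (Fin.init y)).1.isLt
    simp only at h1
    omega
  · rw [if_neg h0, if_pos h0'] at h
    have h1 := congrArg Sigma.fst h
    have := (β.symm (Fin.init y')).1.isLt
    simp only at h1
    omega
  · rw [if_neg h0, if_neg h0'] at h
    obtain ⟨hp, hb⟩ := asm_inj N h
    have hpp : e.symm (y (Fin.last (N + 1)) - 1) = e.symm (y' (Fin.last (N + 1)) - 1) := hp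
    have ht : y (Fin.last (N + 1)) - 1 = y' (Fin.last (N + 1)) - 1 := by
      have := congrArg e hpp
      simpa using this
    have hlast : y (Fin.last (N + 1)) = y' (Fin.last (N + 1)) := by omega
    rw [← Fin.snoc_init_self y, ← Fin.snoc_init_self y', hb, hlast]

lemma gmap_surjective (N : ℕ) (e : SigSpace ≃ ℕ)
    (β : (Σ i : Fin (N + 1), Fin (i.val + 1) → ℕ) ≃ (Fin (N + 1) → ℕ)) :
    Function.Surjective (gmap N e β) := by
  rintro ⟨k, x⟩
  by_cases hk : N + 1 ≤ k
  · exact ⟨_, gmap_high N e β k hk x⟩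
  · exact ⟨_, gmap_low N e β k (by omega) x⟩

/-- `Fin^{n+1}` embeds isomorphically into `Fin_ω` for every
`n`: there is a bijection `f : ∑_{i>0} ω^i → ω^{n+1}` such that `f⁻¹[A] ∈ Fin_ω`
for all `A ∈ Fin^{n+1}`. -/
theorem finPow_isoContained_finOmega (n : ℕ) :
    ∃ f : (Σ m : ℕ, Fin (m + 1) → ℕ) → (Fin (n + 1) → ℕ), Function.Bijective f ∧
      ∀ A ∈ FinPow n, f ⁻¹' A ∈ FinOmega := by
  have hXinf : Infinite SigSpace :=
    Infinite.of_injective (fun t => ⟨0, fun _ => t⟩)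
      (Function.LeftInverse.injective
        (g := fun p : SigSpace => p.2 ⟨0, Nat.succ_pos _⟩) (fun t => rfl))
  obtain ⟨e⟩ : Nonempty (SigSpace ≃ ℕ) := nonempty_equiv_of_countable
  cases n with
  | zero =>
    refine ⟨fun p => fun _ => e p, ⟨?_, ?_⟩, ?_⟩
    · intro a b h
      exact e.injective (congrFun h ⟨0, Nat.one_pos⟩)
    · intro y
      refine ⟨e.symm (y ⟨0, Nat.one_pos⟩), ?_⟩
      funext i
      have hi : i = ⟨0, Nat.one_pos⟩ := Fin.ext (by have := i.isLt; omega)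
      show e (e.symm (y ⟨0, Nat.one_pos⟩)) = y i
      rw [Equiv.apply_symm_apply, hi]
    · intro A hA
      refine ⟨0, (hatS (⇑e) 0 A)ᶜ, ?_, ?_⟩
      · rw [compl_compl]
        exact hatS_small (⇑e) e.injective 0 A hA
      · intro k hk x hP hMem
        apply hP
        refine ⟨⟨k, x⟩, ?_, ?_⟩
        · rw [fin1_update]
          exact hMem
        · show x ⟨k, _⟩ = _
          unfold lastProj
          congr 1
          all_goals simp only [Fin.mk.injEq, Fin.val_last]
          all_goals omega
  | succ N =>
    have hLinf : Infinite (Σ i : Fin (N + 1), Fin (i.val + 1) → ℕ) :=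
      Infinite.of_injective (fun t => ⟨⟨0, Nat.succ_pos _⟩, fun _ => t⟩)
        (Function.LeftInverse.injective
          (g := fun p : (Σ i : Fin (N + 1), Fin (i.val + 1) → ℕ) => p.2 ⟨0, Nat.succ_pos _⟩)
          (fun t => rfl))
    have hTinf : Infinite (Fin (N + 1) → ℕ) :=
      Infinite.of_injective (fun t => fun _ => t)
        (Function.LeftInverse.injective
          (g := fun q : Fin (N + 1) → ℕ => q ⟨0, Nat.succ_pos _⟩) (fun t => rfl))
    obtain ⟨β⟩ : Nonempty ((Σ i : Fin (N + 1), Fin (i.val + 1) → ℕ) ≃ (Fin (N + 1) → ℕ)) :=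
      nonempty_equiv_of_countable
    set g := gmap N e β with hg
    have hinj := gmap_injective N e β
    have hsurj := gmap_surjective N e β
    have hL : Function.LeftInverse (Function.invFun g) g :=
      Function.leftInverse_invFun hinj
    have hR : Function.RightInverse (Function.invFun g) g :=
      Function.rightInverse_invFun hsurj
    refine ⟨Function.invFun g, Function.bijective_iff_has_inverse.mpr ⟨g, hR, hL⟩, ?_⟩
    have hf_high : ∀ (k : ℕ) (hk : N + 1 ≤ k) (x : Fin (k + 1) → ℕ),
        Function.invFun g ⟨k, x⟩
          = Fin.snoc (blk N k hk x) (e ⟨k - (N + 1), xhat N k x⟩ + 1) := by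
      intro k hk x
      rw [← gmap_high N e β k hk x]
      exact hL _
    intro A hA
    have hF : Function.Injective (fun p : SigSpace => e p + 1) := by
      intro a b h
      have h' : e a + 1 = e b + 1 := h
      exact e.injective (Nat.add_right_cancel h')
    refine ⟨N + 1, (hatS (fun p => e p + 1) (N + 1) A)ᶜ, ?_, ?_⟩
    · rw [compl_compl]
      exact hatS_small _ hF (N + 1) A hA
    · intro k hk x hP hMem
      apply hP
      refine ⟨⟨k - (N + 1), xhat N k x⟩, ?_, ?_⟩
      · have heq : Function.update (lastProj (Nat.succ_le_succ hk) x) (Fin.last (N + 1))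
            (e ⟨k - (N + 1), xhat N k x⟩ + 1) = Function.invFun g ⟨k, x⟩ := by
          rw [hf_high k hk x]
          funext i
          by_cases hi : i = Fin.last (N + 1)
          · subst hi
            rw [Function.update_self, Fin.snoc_last]
          · rw [Function.update_of_ne hi]
            rcases Fin.eq_castSucc_or_eq_last i with ⟨i', rfl⟩ | rfl
            · rw [Fin.snoc_castSucc]
              show x _ = x _
              congr 1
              simp only [Fin.mk.injEq, Fin.coe_castSucc]
              omega
            · exact absurd rfl hi
        rw [heq]
        exact hMem
      · show xhat (N) k x ⟨k - (N + 1), _⟩ = _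
        unfold xhat
        rw [dif_neg (lt_irrefl _)]
        show x ⟨k, _⟩ = _
        unfold lastProj
        congr 1
        all_goals simp only [Fin.mk.injEq, Fin.val_last]
        all_goals omega
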